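/- If a function φ : P_2(ℝ^d) → ℝ has intrinsic derivative satisfying |D_m φ(m', x)| ≤ M_1 for all m', x, then for each i the map ξ^i ↦ φ((1/N)∑_{j=1}^N δ_{ξ^j}) (with the other ξ^j fixed) is Lipschitz with constant M_1/N, and consequently by the Efron–Stein inequality, for i.i.d. ξ_1,...,ξ_N ∼ m with finite second moment, Var φ(μ_ξ) ≤ M_1² Var(m)/N. -/

import Mathlib

open MeasureTheory ProbabilityTheory
open scoped ENNReal

noncomputable section

abbrev Euc (d : ℕ) := EuclideanSpace ℝ (Fin d)

/-- Convex combination `(1-t) μ + t ν` of measures. -/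
def mix {α : Type*} [MeasurableSpace α] (μ ν : Measure α) (t : ℝ) : Measure α :=
  (ENNReal.ofReal (1 - t)) • μ + (ENNReal.ofReal t) • ν

/-- `δφ` is a linear functional derivative of `φ` on the space of probability measures. -/
structure IsLinearDeriv {α : Type*} [MeasurableSpace α] (φ : Measure α → ℝ)
    (δφ : Measure α → α → ℝ) : Prop where
  hasDeriv : ∀ μ ν : Measure α, IsProbabilityMeasure μ → IsProbabilityMeasure ν →
    φ ν - φ μ =
      ∫ t in (0:ℝ)..1, (∫ x, δφ (mix μ ν t) x ∂ν - ∫ x, δφ (mix μ ν t) x ∂μ)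

/-- Variance of a measure on `ℝ^d`. -/
noncomputable def varM {d : ℕ} (m : Measure (Euc d)) : ℝ :=
  ∫ x, ‖x - ∫ y, y ∂m‖ ^ 2 ∂m

/-- Empirical measure of `N` points. -/
noncomputable def emp {d N : ℕ} (ξ : Fin N → Euc d) : Measure (Euc d) :=
  (N : ℝ≥0∞)⁻¹ • ∑ i, Measure.dirac (ξ i)

lemma lip_of_grad {d : ℕ} (g : Euc d → ℝ) (hg : Differentiable ℝ g) (M : ℝ)
    (hM : ∀ x, ‖gradient g x‖ ≤ M) (a b : Euc d) : |g a - g b| ≤ M * ‖a - b‖ := by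
  have h : ∀ x, ‖fderiv ℝ g x‖ ≤ M := by
    intro x
    have := hM x
    rwa [gradient, (InnerProductSpace.toDual ℝ (Euc d)).symm.norm_map] at this
  have := convex_univ.norm_image_sub_le_of_norm_fderiv_le
    (fun x _ => hg x) (fun x _ => h x)
    (Set.mem_univ b) (Set.mem_univ a)
  simpa [Real.norm_eq_abs] using this

lemma mix_prob {α : Type*} [MeasurableSpace α] {μ ν : Measure α}
    (hμ : IsProbabilityMeasure μ) (hν : IsProbabilityMeasure ν) {t : ℝ}
    (h0 : 0 ≤ t) (h1 : t ≤ 1) : IsProbabilityMeasure (mix μ ν t) := by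
  constructor
  simp only [mix, Measure.add_apply, Measure.smul_apply, smul_eq_mul,
    measure_univ, mul_one]
  rw [← ENNReal.ofReal_add (by linarith) h0]
  norm_num

instance emp_prob {d N : ℕ} [NeZero N] (x : Fin N → Euc d) :
    IsProbabilityMeasure (emp x) := by
  constructor
  simp only [emp, Measure.smul_apply, Measure.finset_sum_apply, smul_eq_mul]
  simp only [Measure.dirac_apply_of_mem (Set.mem_univ _), Finset.sum_const,
    Finset.card_univ, Fintype.card_fin, nsmul_eq_mul, mul_one]
  simp [ENNReal.inv_mul_cancel (show (N:ℝ≥0∞) ≠ 0 by exact_mod_cast NeZero.ne N) (by simp)]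

lemma integral_emp {d N : ℕ} (f : Euc d → ℝ) (hf : Measurable f) (x : Fin N → Euc d) :
    ∫ a, f a ∂(emp x) = (N : ℝ)⁻¹ * ∑ i, f (x i) := by
  rw [emp, integral_smul_measure, integral_finset_sum_measure
    (fun i _ => (integrable_const (f (x i))).congr (ae_eq_dirac' hf).symm)]
  · simp [integral_dirac' _ _ hf.stronglyMeasurable, ENNReal.toReal_inv]

lemma part1 {d N : ℕ} [NeZero N]
    (φ : Measure (Euc d) → ℝ) (δφ : Measure (Euc d) → Euc d → ℝ) (M1 : ℝ)
    (hδ : IsLinearDeriv φ δφ)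
    (hδdiff : ∀ (m' : Measure (Euc d)), IsProbabilityMeasure m' → Differentiable ℝ (δφ m'))
    (hM1 : ∀ (m' : Measure (Euc d)), IsProbabilityMeasure m' →
      ∀ x, ‖gradient (δφ m') x‖ ≤ M1)
    (i : Fin N) (x x' : Fin N → Euc d) (hx : ∀ j, j ≠ i → x j = x' j) :
    |φ (emp x) - φ (emp x')| ≤ (M1 / N) * ‖x i - x' i‖ := by
  rw [hδ.hasDeriv (emp x') (emp x) inferInstance inferInstance]
  have key : ∀ t ∈ Set.uIoc (0:ℝ) 1,
      ‖∫ a, δφ (mix (emp x') (emp x) t) a ∂(emp x)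
        - ∫ a, δφ (mix (emp x') (emp x) t) a ∂(emp x')‖ ≤ (M1 / N) * ‖x i - x' i‖ := by
    intro t ht
    rw [Set.uIoc_of_le (by norm_num : (0:ℝ) ≤ 1)] at ht
    have hp' : IsProbabilityMeasure (mix (emp x') (emp x) t) :=
      mix_prob inferInstance inferInstance ht.1.le ht.2
    set m' := mix (emp x') (emp x) t
    have hmeas' : Measurable (δφ m') := (hδdiff m' hp').continuous.measurable
    rw [integral_emp _ hmeas', integral_emp _ hmeas', ← mul_sub, ← Finset.sum_sub_distrib]
    have hsum : ∑ j, (δφ m' (x j) - δφ m' (x' j)) = δφ m' (x i) - δφ m' (x' i) := by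
      rw [Finset.sum_eq_single i]
      · intro j _ hj; rw [hx j hj, sub_self]
      · intro h; exact absurd (Finset.mem_univ i) h
    rw [hsum]
    have hlip := lip_of_grad (δφ m') (hδdiff m' hp') M1 (hM1 m' hp') (x i) (x' i)
    rw [Real.norm_eq_abs, abs_mul, abs_of_nonneg (by positivity : (0:ℝ) ≤ (N:ℝ)⁻¹)]
    rw [div_eq_mul_inv, mul_comm M1 ((N:ℝ)⁻¹), mul_assoc]
    exact mul_le_mul_of_nonneg_left hlip (by positivity)
  have := intervalIntegral.norm_integral_le_of_norm_le_const key
  simpa [Real.norm_eq_abs] using this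

section Var
variable {α : Type*} [MeasurableSpace α] {μ : Measure α} [IsProbabilityMeasure μ]

lemma var_min {f : α → ℝ} (hf : MemLp f 2 μ) (a : ℝ) :
    ∫ y, (f y - a)^2 ∂μ = (∫ y, (f y - ∫ z, f z ∂μ)^2 ∂μ) + ((∫ z, f z ∂μ) - a)^2 := by
  set c := ∫ z, f z ∂μ with hc
  have hfi : Integrable f μ := hf.integrable one_le_two
  have hfc : MemLp (fun y => f y - c) 2 μ := hf.sub (memLp_const c)
  have h2 : Integrable (fun y => (f y - c)^2) μ :=
    (memLp_two_iff_integrable_sq hfc.aestronglyMeasurable).1 hfc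
  have hzero : ∫ y, (f y - c) ∂μ = 0 := by
    rw [integral_sub hfi (integrable_const c), integral_const]; simp [hc]
  have hpt : (fun y => (f y - a)^2)
      = fun y => (f y - c)^2 + ((2*(c-a)) * (f y - c) + (c-a)^2) := by
    funext y; ring
  have hsub : Integrable (fun y => f y - c) μ := hfi.sub (integrable_const c)
  have hB : Integrable (fun y => 2*(c-a) * (f y - c)) μ := hsub.const_mul _
  have hC : Integrable (fun y => 2*(c-a) * (f y - c) + (c-a)^2) μ := hB.add (integrable_const _)
  rw [hpt, integral_add h2 hC,
    integral_add hB (integrable_const _), integral_const_mul _ _, hzero]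
  simp
end Var

section VarVec
variable {d : ℕ} {m : Measure (Euc d)} [IsProbabilityMeasure m]

lemma int_norm (hmom : Integrable (fun x : Euc d => ‖x‖ ^ 2) m) :
    Integrable (fun x : Euc d => ‖x‖) m := by
  have hbound : Integrable (fun y : Euc d => 1 + ‖y‖^2) m := (integrable_const 1).add hmom
  refine Integrable.mono' hbound
    continuous_norm.aestronglyMeasurable (ae_of_all _ fun y => ?_)
  rw [norm_norm]
  nlinarith [norm_nonneg y, sq_nonneg (‖y‖ - 1)]

lemma int_id (hmom : Integrable (fun x : Euc d => ‖x‖ ^ 2) m) :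
    Integrable (fun x : Euc d => x) m := by
  refine Integrable.mono' (int_norm hmom) continuous_id.aestronglyMeasurable
    (ae_of_all _ fun y => le_refl _)

lemma int_norm_sub_sq (hmom : Integrable (fun x : Euc d => ‖x‖ ^ 2) m) (a : Euc d) :
    Integrable (fun y : Euc d => ‖y - a‖ ^ 2) m := by
  have hbound : Integrable (fun y : Euc d => ‖y‖^2 + 2*‖a‖*‖y‖ + ‖a‖^2) m :=
    (hmom.add ((int_norm hmom).const_mul (2*‖a‖))).add (integrable_const (‖a‖^2))
  refine Integrable.mono' hbound ((continuous_id.sub continuous_const).norm.pow 2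
    ).aestronglyMeasurable (ae_of_all _ fun y => ?_)
  have h1 := norm_sub_le y a
  have h2 := norm_nonneg (y - a)
  rw [Real.norm_eq_abs, abs_of_nonneg (by positivity)]
  nlinarith [norm_nonneg y, norm_nonneg a]

lemma var_min_vec (hmom : Integrable (fun x : Euc d => ‖x‖ ^ 2) m) (a : Euc d) :
    ∫ y, ‖y - a‖ ^ 2 ∂m = varM m + ‖(∫ y, y ∂m) - a‖ ^ 2 := by
  set c := ∫ y, y ∂m with hc
  have hid := int_id hmom
  have hzero : ∫ y, (y - c) ∂m = (0 : Euc d) := by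
    rw [integral_sub hid (integrable_const c), integral_const]; simp [hc]
  have hpt : (fun y : Euc d => ‖y - a‖^2)
      = fun y => ‖y - c‖^2 + (2 * (inner ℝ (c - a) (y - c) : ℝ) + ‖c - a‖^2) := by
    funext y
    have : y - a = (y - c) + (c - a) := by abel
    rw [this, norm_add_sq_real, real_inner_comm]
    ring
  have hinner : Integrable (fun y : Euc d => (inner ℝ (c - a) (y - c) : ℝ)) m :=
    (hid.sub (integrable_const c)).const_inner _
  have hsub : Integrable (fun y : Euc d => y - c) m := hid.sub (integrable_const c)
  have hB : Integrable (fun y : Euc d => 2 * (inner ℝ (c - a) (y - c) : ℝ)) m :=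
    hinner.const_mul 2
  have hC : Integrable (fun y : Euc d => 2 * (inner ℝ (c - a) (y - c) : ℝ) + ‖c - a‖^2) m :=
    hB.add (integrable_const _)
  rw [hpt, integral_add (int_norm_sub_sq hmom c) hC,
    integral_add hB (integrable_const _), integral_const_mul _ _,
    integral_inner hsub, hzero]
  simp [varM, ← hc]
end VarVec

section VarLip
variable {d : ℕ} {m : Measure (Euc d)} [IsProbabilityMeasure m]

lemma lip_continuous {L : ℝ} {g : Euc d → ℝ} (hg : ∀ a b, |g a - g b| ≤ L * ‖a - b‖) :
    Continuous g := by
  refine LipschitzWith.continuous (K := Real.toNNReal L) (LipschitzWith.of_dist_le_mul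
    fun a b => ?_)
  rw [Real.dist_eq, dist_eq_norm]
  exact le_trans (hg a b) (mul_le_mul_of_nonneg_right (Real.le_coe_toNNReal L)
    (norm_nonneg _))

lemma lip_memℒp (hmom : Integrable (fun x : Euc d => ‖x‖ ^ 2) m)
    (g : Euc d → ℝ) (L : ℝ) (hg : ∀ a b, |g a - g b| ≤ L * ‖a - b‖) :
    MemLp g 2 m := by
  have hc : Continuous g := lip_continuous hg
  rw [memLp_two_iff_integrable_sq hc.aestronglyMeasurable]
  set A := |g 0| with hA
  have hbound : Integrable (fun x : Euc d => A^2 + (2*A*L)*‖x‖ + L^2*‖x‖^2) m :=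
    ((integrable_const _).add ((int_norm hmom).const_mul _)).add (hmom.const_mul _)
  refine Integrable.mono' hbound ((hc.pow 2).aestronglyMeasurable)
    (ae_of_all _ fun x => ?_)
  have h1 : |g x| - A ≤ L * ‖x‖ := by
    have := hg x 0
    rw [sub_zero] at this
    calc |g x| - A ≤ |g x - g 0| := abs_sub_abs_le_abs_sub _ _
    _ ≤ L * ‖x‖ := this
  rw [Real.norm_eq_abs, abs_of_nonneg (sq_nonneg _)]
  nlinarith [abs_nonneg (g x), abs_nonneg (g 0), sq_abs (g x), sq_abs (g 0)]

set_option maxHeartbeats 1000000 in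

lemma var_lip (hmom : Integrable (fun x : Euc d => ‖x‖ ^ 2) m)
    (L : ℝ) (g : Euc d → ℝ) (hg : ∀ a b, |g a - g b| ≤ L * ‖a - b‖) :
    ∫ x, (g x - ∫ y, g y ∂m)^2 ∂m ≤ L^2 * varM m := by
  have hml : MemLp g 2 m := lip_memℒp hmom g L hg
  set c := ∫ y, g y ∂m with hc
  set V := ∫ x, (g x - c)^2 ∂m with hV
  have hsub : MemLp (fun x => g x - c) 2 m := hml.sub (memLp_const c)
  have hVint : Integrable (fun x => (g x - c)^2) m :=
    (memLp_two_iff_integrable_sq hsub.aestronglyMeasurable).1 hsub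
  set c' := ∫ y, y ∂m with hc'
  have hpoint : ∀ x, ∫ y, (g y - g x)^2 ∂m = V + (g x - c)^2 := by
    intro x
    rw [var_min hml (g x), ← hc, ← hV]
    have : (c - g x)^2 = (g x - c)^2 := by ring
    rw [this]
  have hdouble : ∫ x, (∫ y, (g y - g x)^2 ∂m) ∂m = 2*V := by
    have he : (fun x => ∫ y, (g y - g x)^2 ∂m) = fun x => V + (g x - c)^2 :=
      funext hpoint
    rw [he, integral_add (integrable_const V) hVint, integral_const, ← hV]
    simp; ring
  have hnormint : Integrable (fun x : Euc d => ‖c' - x‖^2) m := by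
    simpa [norm_sub_rev] using int_norm_sub_sq hmom c'
  have hb : ∀ x, ∫ y, (g y - g x)^2 ∂m ≤ L^2 * (varM m + ‖c' - x‖^2) := by
    intro x
    have h1 : ∫ y, (g y - g x)^2 ∂m ≤ ∫ y, L^2 * ‖y - x‖^2 ∂m := by
      refine integral_mono_of_nonneg (ae_of_all _ fun y => sq_nonneg _)
        ((int_norm_sub_sq hmom x).const_mul _) (ae_of_all _ fun y => ?_)
      have := hg y x
      show (g y - g x)^2 ≤ L^2 * ‖y - x‖^2
      nlinarith [abs_nonneg (g y - g x), norm_nonneg (y - x), sq_abs (g y - g x)]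
    rwa [integral_const_mul _ _, var_min_vec hmom x, ← hc'] at h1
  have h2 : ∫ x, (∫ y, (g y - g x)^2 ∂m) ∂m ≤ ∫ x, L^2 * (varM m + ‖c' - x‖^2) ∂m := by
    refine integral_mono_of_nonneg
      (ae_of_all _ fun x => integral_nonneg fun y => sq_nonneg _)
      (((integrable_const (varM m)).add hnormint).const_mul _) (ae_of_all _ hb)
  have h3 : ∫ x, L^2 * (varM m + ‖c' - x‖^2) ∂m = 2 * (L^2 * varM m) := by
    rw [integral_const_mul _ _, integral_add (integrable_const _) hnormint, integral_const]
    have h4 : ∫ x, ‖c' - x‖^2 ∂m = varM m := by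
      simp_rw [norm_sub_rev]
      rw [varM, ← hc']
    rw [h4]
    simp; ring
  rw [hdouble, h3] at h2
  linarith
end VarLip

section PiStuff
variable {d : ℕ} {m : Measure (Euc d)} [IsProbabilityMeasure m]

lemma map_eval {n : ℕ} (i : Fin n) :
    (Measure.pi fun _ : Fin n => m).map (Function.eval i) = m := by
  ext s hs
  rw [Measure.map_apply (measurable_pi_apply i) hs]
  have hpre : Function.eval i ⁻¹' s = Set.pi Set.univ
      (Function.update (fun _ : Fin n => (Set.univ : Set (Euc d))) i s) := by
    ext x
    simp only [Set.mem_preimage, Function.eval, Set.mem_univ_pi, Function.update_apply]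
    constructor
    · intro h j
      split_ifs with hj
      · subst hj; exact h
      · trivial
    · intro h
      have := h i
      simpa using this
  rw [hpre, Measure.pi_pi]
  simp [Function.update_apply, apply_ite m, measure_univ, Finset.prod_ite_eq']

lemma int_eval {n : ℕ} (i : Fin n) {f : Euc d → ℝ} (hf : AEStronglyMeasurable f m)
    (hfi : Integrable f m) :
    Integrable (fun x : Fin n → Euc d => f (x i)) (Measure.pi fun _ : Fin n => m) := by
  have h1 : AEStronglyMeasurable f ((Measure.pi fun _ : Fin n => m).map (Function.eval i)) := by
    rw [map_eval i]; exact hf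
  have h2 : Integrable f ((Measure.pi fun _ : Fin n => m).map (Function.eval i)) := by
    rw [map_eval i]; exact hfi
  exact (integrable_map_measure h1 (measurable_pi_apply i).aemeasurable).1 h2

lemma coordLip_sum {n : ℕ} {L : ℝ} (hL : 0 ≤ L) {F : (Fin n → Euc d) → ℝ}
    (hF : ∀ (i : Fin n) (x x' : Fin n → Euc d), (∀ j, j ≠ i → x j = x' j) →
      |F x - F x'| ≤ L * ‖x i - x' i‖) :
    ∀ x x', |F x - F x'| ≤ L * ∑ j, ‖x j - x' j‖ := by
  suffices h : ∀ s : Finset (Fin n), ∀ x x' : Fin n → Euc d, (∀ j, j ∉ s → x j = x' j) →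
      |F x - F x'| ≤ L * ∑ j ∈ s, ‖x j - x' j‖ by
    intro x x'
    exact h Finset.univ x x' (fun j hj => absurd (Finset.mem_univ j) hj)
  intro s
  induction s using Finset.induction with
  | empty =>
    intro x x' h
    have : x = x' := funext fun j => h j (by simp)
    simp [this]
  | @insert a s ha ih =>
    intro x x' h
    set y := Function.update x a (x' a) with hy
    have h1 : |F x - F y| ≤ L * ‖x a - y a‖ := by
      refine hF a x y fun j hj => ?_
      rw [hy, Function.update_of_ne hj]
    have hya : y a = x' a := Function.update_self _ _ _
    have h2 : |F y - F x'| ≤ L * ∑ j ∈ s, ‖y j - x' j‖ := by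
      refine ih y x' fun j hj => ?_
      by_cases hja : j = a
      · subst hja; exact hya
      · rw [hy, Function.update_of_ne hja]
        exact h j (by simp [hja, hj])
    have hsum : ∑ j ∈ s, ‖y j - x' j‖ = ∑ j ∈ s, ‖x j - x' j‖ := by
      refine Finset.sum_congr rfl fun j hj => ?_
      rw [hy, Function.update_of_ne (fun hja => ha (by rw [← hja]; exact hj))]
    rw [Finset.sum_insert ha, mul_add]
    calc |F x - F x'| ≤ |F x - F y| + |F y - F x'| := abs_sub_le _ _ _
    _ ≤ L * ‖x a - y a‖ + L * ∑ j ∈ s, ‖y j - x' j‖ := add_le_add h1 h2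
    _ = L * ‖x a - x' a‖ + L * ∑ j ∈ s, ‖x j - x' j‖ := by rw [hya, hsum]

lemma sumLip_continuous {n : ℕ} {L : ℝ} {F : (Fin n → Euc d) → ℝ}
    (hF : ∀ x x', |F x - F x'| ≤ L * ∑ j, ‖x j - x' j‖) : Continuous F := by
  refine LipschitzWith.continuous (K := Real.toNNReal L * n)
    (LipschitzWith.of_dist_le_mul fun x x' => ?_)
  rw [Real.dist_eq]
  have h1 : L * ∑ j, ‖x j - x' j‖ ≤ Real.toNNReal L * ∑ j, ‖x j - x' j‖ :=
    mul_le_mul_of_nonneg_right (Real.le_coe_toNNReal L)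
      (Finset.sum_nonneg fun j _ => norm_nonneg _)
  have hb : ∀ j : Fin n, ‖x j - x' j‖ ≤ dist x x' := fun j => by
    rw [← dist_eq_norm]; exact dist_le_pi_dist x x' j
  have h2 : ∑ j, ‖x j - x' j‖ ≤ (n : ℝ) * dist x x' := by
    calc ∑ j, ‖x j - x' j‖ ≤ ∑ _j : Fin n, dist x x' :=
          Finset.sum_le_sum fun j _ => hb j
      _ = (n : ℝ) * dist x x' := by
          rw [Finset.sum_const, Finset.card_univ, Fintype.card_fin, nsmul_eq_mul]
  calc |F x - F x'| ≤ L * ∑ j, ‖x j - x' j‖ := hF x x'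
    _ ≤ Real.toNNReal L * ∑ j, ‖x j - x' j‖ := h1
    _ ≤ Real.toNNReal L * ((n : ℝ) * dist x x') :=
        mul_le_mul_of_nonneg_left h2 (by positivity)
    _ = ↑(Real.toNNReal L * n) * dist x x' := by push_cast; ring

lemma sumLip_memℒp {n : ℕ} (hmom : Integrable (fun x : Euc d => ‖x‖ ^ 2) m)
    {L : ℝ} {F : (Fin n → Euc d) → ℝ}
    (hF : ∀ x x', |F x - F x'| ≤ L * ∑ j, ‖x j - x' j‖) :
    MemLp F 2 (Measure.pi fun _ : Fin n => m) := by
  have hc : Continuous F := sumLip_continuous hF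
  rw [memLp_two_iff_integrable_sq hc.aestronglyMeasurable]
  set A := |F 0| with hA
  have hS : Integrable (fun x : Fin n → Euc d => ∑ j, ‖x j‖)
      (Measure.pi fun _ : Fin n => m) := by
    refine integrable_finset_sum _ fun j _ => ?_
    exact int_eval j continuous_norm.aestronglyMeasurable (int_norm hmom)
  have hQ : Integrable (fun x : Fin n → Euc d => ∑ j, ‖x j‖^2)
      (Measure.pi fun _ : Fin n => m) := by
    refine integrable_finset_sum _ fun j _ => ?_
    exact int_eval j (continuous_norm.pow 2).aestronglyMeasurable hmom
  have hbound : Integrable (fun x : Fin n → Euc d =>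
      A^2 + (2*A*L)*(∑ j, ‖x j‖) + (L^2*n)*(∑ j, ‖x j‖^2))
      (Measure.pi fun _ : Fin n => m) :=
    ((integrable_const _).add (hS.const_mul _)).add (hQ.const_mul _)
  refine Integrable.mono' hbound ((hc.pow 2).aestronglyMeasurable)
    (ae_of_all _ fun x => ?_)
  have h1 : |F x| - A ≤ L * ∑ j, ‖x j‖ := by
    have := hF x 0
    simp only [Pi.zero_apply, sub_zero] at this
    calc |F x| - A ≤ |F x - F 0| := abs_sub_abs_le_abs_sub _ _
    _ ≤ L * ∑ j, ‖x j‖ := this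
  have hS0 : (0:ℝ) ≤ ∑ j, ‖x j‖ := Finset.sum_nonneg fun j _ => norm_nonneg _
  have hCS : (∑ j, ‖x j‖)^2 ≤ (n:ℝ) * ∑ j, ‖x j‖^2 := by
    have := sq_sum_le_card_mul_sum_sq (s := (Finset.univ : Finset (Fin n)))
      (f := fun j => ‖x j‖)
    simpa using this
  have hCS2 : L^2 * (∑ j, ‖x j‖)^2 ≤ L^2 * ((n:ℝ) * ∑ j, ‖x j‖^2) :=
    mul_le_mul_of_nonneg_left hCS (sq_nonneg L)
  rw [Real.norm_eq_abs, abs_of_nonneg (sq_nonneg _)]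
  nlinarith [sq_abs (F x), abs_nonneg (F x), abs_nonneg (F 0)]
end PiStuff

section ES
set_option maxHeartbeats 1000000

lemma efron_stein_aux {d : ℕ} (m : Measure (Euc d)) [IsProbabilityMeasure m]
    (hmom : Integrable (fun x : Euc d => ‖x‖ ^ 2) m) (L : ℝ) (hL : 0 ≤ L) :
    ∀ (n : ℕ) (F : (Fin n → Euc d) → ℝ),
      (∀ (i : Fin n) (x x' : Fin n → Euc d), (∀ j, j ≠ i → x j = x' j) →
        |F x - F x'| ≤ L * ‖x i - x' i‖) →
      ∫ x, (F x - ∫ y, F y ∂(Measure.pi fun _ : Fin n => m))^2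
        ∂(Measure.pi fun _ : Fin n => m) ≤ n * (L^2 * varM m) := by
  intro n
  induction n with
  | zero =>
    intro F hF
    have hFc : ∀ x y : Fin 0 → Euc d, F x = F y := fun x y =>
      congrArg F (Subsingleton.elim _ _)
    have h1 : ∫ y, F y ∂(Measure.pi fun _ : Fin 0 => m) = F default := by
      have hconst : (fun y : Fin 0 → Euc d => F y) = fun _ => F default :=
        funext fun y => hFc y default
      rw [hconst, integral_const]
      simp
    have h2 : (fun x : Fin 0 → Euc d =>
        (F x - ∫ y, F y ∂(Measure.pi fun _ : Fin 0 => m))^2) = fun _ => (0:ℝ) := by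
      funext x
      rw [h1, hFc x default]
      ring
    rw [h2, integral_zero]
    simp
  | succ n ih =>
    intro F hF
    set ν := Measure.pi fun _ : Fin n => m with hν
    set Pi1 := Measure.pi fun _ : Fin (n+1) => m with hPi1
    set e := MeasurableEquiv.piFinSuccAbove (fun _ : Fin (n+1) => Euc d) 0 with he
    have mp : MeasurePreserving e Pi1 (m.prod ν) :=
      measurePreserving_piFinSuccAbove (fun _ : Fin (n+1) => m) 0
    have hsymm : ∀ (a : Euc d) (y : Fin n → Euc d),
        e.symm (a, y) = Fin.insertNth 0 a y := fun a y => rfl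
    -- integral transfer
    have hint : ∀ (g : (Fin (n+1) → Euc d) → ℝ),
        ∫ x, g x ∂Pi1 = ∫ z, g (e.symm z) ∂(m.prod ν) := by
      intro g
      have h := mp.integral_comp e.measurableEmbedding (fun z => g (e.symm z))
      simp only [MeasurableEquiv.symm_apply_apply] at h
      exact h.symm ▸ h
    -- integrable transfer
    have hintg : ∀ (g : Euc d × (Fin n → Euc d) → ℝ),
        Integrable (fun x => g (e x)) Pi1 → Integrable g (m.prod ν) := by
      intro g hg
      exact (mp.integrable_comp_emb e.measurableEmbedding).1 hg
    -- slice Lipschitz in the first coordinate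
    have hslice : ∀ (y : Fin n → Euc d) (a a' : Euc d),
        |F (Fin.insertNth 0 a y) - F (Fin.insertNth 0 a' y)| ≤ L * ‖a - a'‖ := by
      intro y a a'
      have h := hF 0 (Fin.insertNth 0 a y) (Fin.insertNth 0 a' y) ?_
      · rwa [Fin.insertNth_apply_same, Fin.insertNth_apply_same] at h
      · intro j hj
        obtain ⟨k, rfl⟩ := Fin.eq_succ_of_ne_zero hj
        rw [← Fin.succAbove_zero, Fin.insertNth_apply_succAbove,
          Fin.insertNth_apply_succAbove]
    set G : (Fin n → Euc d) → ℝ := fun y => ∫ a, F (Fin.insertNth 0 a y) ∂m with hG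
    have hfy : ∀ y, MemLp (fun a => F (Fin.insertNth 0 a y)) 2 m := fun y =>
      lip_memℒp hmom _ L (hslice y)
    have hvy : ∀ y, ∫ a, (F (Fin.insertNth 0 a y) - G y)^2 ∂m ≤ L^2 * varM m := fun y =>
      var_lip hmom L _ (hslice y)
    -- G is coordinate-Lipschitz
    have hGlip : ∀ (i : Fin n) (y y' : Fin n → Euc d), (∀ j, j ≠ i → y j = y' j) →
        |G y - G y'| ≤ L * ‖y i - y' i‖ := by
      intro i y y' hyy
      have hdiff : ∀ a, |F (Fin.insertNth 0 a y) - F (Fin.insertNth 0 a y')|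
          ≤ L * ‖y i - y' i‖ := by
        intro a
        have h := hF (Fin.succ i) (Fin.insertNth 0 a y) (Fin.insertNth 0 a y') ?_
        · rwa [← Fin.succAbove_zero, Fin.insertNth_apply_succAbove,
            Fin.insertNth_apply_succAbove] at h
        · intro j hj
          rcases Fin.eq_zero_or_eq_succ j with rfl | ⟨k, rfl⟩
          · rw [Fin.insertNth_apply_same, Fin.insertNth_apply_same]
          · have hk : k ≠ i := fun hk => hj (by rw [hk])
            rw [← Fin.succAbove_zero, Fin.insertNth_apply_succAbove,
              Fin.insertNth_apply_succAbove]
            exact hyy k hk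
      have hi1 : Integrable (fun a => F (Fin.insertNth 0 a y)) m :=
        (hfy y).integrable one_le_two
      have hi2 : Integrable (fun a => F (Fin.insertNth 0 a y')) m :=
        (hfy y').integrable one_le_two
      have habs : |∫ a, (F (Fin.insertNth 0 a y) - F (Fin.insertNth 0 a y')) ∂m|
          ≤ ∫ a, |F (Fin.insertNth 0 a y) - F (Fin.insertNth 0 a y')| ∂m := by
        simpa only [Real.norm_eq_abs] using norm_integral_le_integral_norm
          (μ := m) (f := fun a => F (Fin.insertNth 0 a y) - F (Fin.insertNth 0 a y'))
      rw [hG]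
      calc |(∫ a, F (Fin.insertNth 0 a y) ∂m) - ∫ a, F (Fin.insertNth 0 a y') ∂m|
          = |∫ a, (F (Fin.insertNth 0 a y) - F (Fin.insertNth 0 a y')) ∂m| := by
            rw [integral_sub hi1 hi2]
        _ ≤ ∫ a, |F (Fin.insertNth 0 a y) - F (Fin.insertNth 0 a y')| ∂m := habs
        _ ≤ ∫ _a, L * ‖y i - y' i‖ ∂m := by
            refine integral_mono_of_nonneg (ae_of_all _ fun a => abs_nonneg _)
              (integrable_const _) (ae_of_all _ fun a => hdiff a)
        _ = L * ‖y i - y' i‖ := by rw [integral_const]; simp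
    -- global integrability of F
    have hFml : MemLp F 2 Pi1 := sumLip_memℒp hmom (coordLip_sum hL hF)
    have hFi : Integrable F Pi1 := hFml.integrable one_le_two
    set c := ∫ x, F x ∂Pi1 with hcdef
    have hFsubml : MemLp (fun x => F x - c) 2 Pi1 := hFml.sub (memLp_const c)
    have hFc2 : Integrable (fun x => (F x - c)^2) Pi1 :=
      (memLp_two_iff_integrable_sq hFsubml.aestronglyMeasurable).1 hFsubml
    -- transfer to the product
    have hF'i : Integrable (fun z : Euc d × (Fin n → Euc d) => F (e.symm z)) (m.prod ν) := by
      refine hintg _ ?_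
      simp only [MeasurableEquiv.symm_apply_apply]
      exact hFi
    have hF'c2 : Integrable (fun z : Euc d × (Fin n → Euc d) => (F (e.symm z) - c)^2)
        (m.prod ν) := by
      refine hintg _ ?_
      simp only [MeasurableEquiv.symm_apply_apply]
      exact hFc2
    -- Fubini
    have hc_eq : c = ∫ y, G y ∂ν := by
      rw [hcdef, hint F, integral_prod_symm _ hF'i]
      simp only [hsymm]
      rfl
    have hVar_eq : ∫ x, (F x - c)^2 ∂Pi1
        = ∫ y, (∫ a, (F (Fin.insertNth 0 a y) - c)^2 ∂m) ∂ν := by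
      rw [hint (fun x => (F x - c)^2), integral_prod_symm _ hF'c2]
      simp only [hsymm]
    -- per-slice decomposition & bound
    have hyb : ∀ y, ∫ a, (F (Fin.insertNth 0 a y) - c)^2 ∂m
        ≤ L^2 * varM m + (G y - c)^2 := by
      intro y
      rw [var_min (hfy y) c]
      exact add_le_add (hvy y) (le_of_eq rfl)
    -- integrate in y
    have hGml : MemLp G 2 ν := sumLip_memℒp hmom (coordLip_sum hL hGlip)
    have hGsubml : MemLp (fun y => G y - c) 2 ν := hGml.sub (memLp_const c)
    have hGc2 : Integrable (fun y => (G y - c)^2) ν :=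
      (memLp_two_iff_integrable_sq hGsubml.aestronglyMeasurable).1 hGsubml
    have hstep : ∫ y, (∫ a, (F (Fin.insertNth 0 a y) - c)^2 ∂m) ∂ν
        ≤ ∫ y, (L^2 * varM m + (G y - c)^2) ∂ν := by
      refine integral_mono_of_nonneg
        (ae_of_all _ fun y => integral_nonneg fun a => sq_nonneg _)
        ((integrable_const _).add hGc2) (ae_of_all _ fun y => hyb y)
    have hrhs : ∫ y, (L^2 * varM m + (G y - c)^2) ∂ν
        = L^2 * varM m + ∫ y, (G y - c)^2 ∂ν := by
      rw [integral_add (integrable_const _) hGc2, integral_const]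
      simp
    have hIH : ∫ y, (G y - c)^2 ∂ν ≤ n * (L^2 * varM m) := by
      rw [hc_eq]
      exact ih G hGlip
    rw [hVar_eq]
    calc ∫ y, (∫ a, (F (Fin.insertNth 0 a y) - c)^2 ∂m) ∂ν
        ≤ L^2 * varM m + ∫ y, (G y - c)^2 ∂ν := by rw [← hrhs]; exact hstep
      _ ≤ L^2 * varM m + n * (L^2 * varM m) := by linarith
      _ = (n+1 : ℕ) * (L^2 * varM m) := by push_cast; ring
end ES

/-- **Coordinate Lipschitz continuity and Efron–Stein variance bound.**
If `φ` has intrinsic derivative bounded by `M₁`, then `ξ^i ↦ φ(μ_ξ)` is `(M₁/N)`-Lipschitz in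
each coordinate, and for i.i.d. `ξ₁,…,ξ_N ∼ m` with finite second moment,
`Var φ(μ_ξ) ≤ M₁² Var(m)/N`. -/
theorem empirical_lipschitz_and_efron_stein {d N : ℕ} (hN : 0 < N)
    {Ω : Type*} [MeasurableSpace Ω] (P : Measure Ω) [IsProbabilityMeasure P]
    (φ : Measure (Euc d) → ℝ) (δφ : Measure (Euc d) → Euc d → ℝ) (M1 : ℝ)
    (hδ : IsLinearDeriv φ δφ)
    (hδdiff : ∀ (m' : Measure (Euc d)), IsProbabilityMeasure m' → Differentiable ℝ (δφ m'))
    (hM1 : ∀ (m' : Measure (Euc d)), IsProbabilityMeasure m' →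
      ∀ x, ‖gradient (δφ m') x‖ ≤ M1)
    (m : Measure (Euc d)) [IsProbabilityMeasure m]
    (hmom : Integrable (fun x : Euc d => ‖x‖ ^ 2) m)
    (ξ : Fin N → Ω → Euc d) (hmeas : ∀ i, Measurable (ξ i))
    (hiid : Measure.map (fun ω i => ξ i ω) P = Measure.pi fun _ => m) :
    (∀ (i : Fin N) (x x' : Fin N → Euc d), (∀ j, j ≠ i → x j = x' j) →
      |φ (emp x) - φ (emp x')| ≤ (M1 / N) * ‖x i - x' i‖) ∧
    ∫ ω, (φ (emp fun i => ξ i ω) - ∫ ω', φ (emp fun i => ξ i ω') ∂P) ^ 2 ∂P ≤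
      M1 ^ 2 * varM m / N := by
  haveI : NeZero N := ⟨hN.ne'⟩
  have hp1 : ∀ (i : Fin N) (x x' : Fin N → Euc d), (∀ j, j ≠ i → x j = x' j) →
      |φ (emp x) - φ (emp x')| ≤ (M1 / N) * ‖x i - x' i‖ :=
    fun i x x' h => part1 φ δφ M1 hδ hδdiff hM1 i x x' h
  refine ⟨hp1, ?_⟩
  have hM1nn : 0 ≤ M1 := le_trans (norm_nonneg _) (hM1 m inferInstance 0)
  have hL : 0 ≤ M1 / N := div_nonneg hM1nn (Nat.cast_nonneg N)
  set F : (Fin N → Euc d) → ℝ := fun x => φ (emp x) with hF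
  have hFcoord : ∀ (i : Fin N) (x x' : Fin N → Euc d), (∀ j, j ≠ i → x j = x' j) →
      |F x - F x'| ≤ (M1 / N) * ‖x i - x' i‖ := hp1
  have hES := efron_stein_aux m hmom (M1/N) hL N F hFcoord
  have hFc : Continuous F := sumLip_continuous (coordLip_sum hL hFcoord)
  set T : Ω → (Fin N → Euc d) := fun ω i => ξ i ω with hT
  have hTm : Measurable T := measurable_pi_lambda _ fun i => hmeas i
  have hmap : ∀ (g : (Fin N → Euc d) → ℝ), Continuous g →
      ∫ ω, g (T ω) ∂P = ∫ x, g x ∂(Measure.pi fun _ : Fin N => m) := by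
    intro g hg
    rw [← hiid, integral_map hTm.aemeasurable]
    exact hg.aestronglyMeasurable
  have hc : ∫ ω', φ (emp fun i => ξ i ω') ∂P = ∫ x, F x ∂(Measure.pi fun _ : Fin N => m) :=
    hmap F hFc
  set c := ∫ x, F x ∂(Measure.pi fun _ : Fin N => m) with hcdef
  have houter : ∫ ω, (F (T ω) - c) ^ 2 ∂P
      = ∫ x, (F x - c) ^ 2 ∂(Measure.pi fun _ : Fin N => m) :=
    hmap (fun x => (F x - c) ^ 2) (by continuity)
  have hgoal : ∫ ω, (φ (emp fun i => ξ i ω) - ∫ ω', φ (emp fun i => ξ i ω') ∂P) ^ 2 ∂P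
      = ∫ x, (F x - c) ^ 2 ∂(Measure.pi fun _ : Fin N => m) := by
    rw [← houter]
    simp only [hc]
    rfl
  rw [hgoal]
  have harith : (N:ℝ) * ((M1/N)^2 * varM m) = M1 ^ 2 * varM m / N := by
    have hN' : (N:ℝ) ≠ 0 := Nat.cast_ne_zero.2 hN.ne'
    field_simp
  calc ∫ x, (F x - c) ^ 2 ∂(Measure.pi fun _ : Fin N => m)
      ≤ N * ((M1/N)^2 * varM m) := hES
    _ = M1 ^ 2 * varM m / N := harith

end
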